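/- For every H ∈ (0,1) and every t ≥ 0, one has B_H(t) ≤ 2·e^{−min(H, 1−H)·t}, where B_H(t) = [2(1+H)(e^{Ht} + e^{−Ht}) − (e^{(1+H)t} + e^{−(1+H)t}) + (e^{t/2} − e^{−t/2})^{2H+2}]/(2+4H). -/

import Mathlib

/-- The correlation function `B_H` (formula (18)) of the stationary process dual to the
integrated fractional Brownian motion of Hurst index `H`. -/
noncomputable def BH (H t : ℝ) : ℝ :=
  (2*(1+H)*(Real.exp (H*t) + Real.exp (-H*t))
    - (Real.exp ((1+H)*t) + Real.exp (-(1+H)*t))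
    + (Real.exp (t/2) - Real.exp (-t/2)) ^ (2*H+2)) / (2+4*H)

lemma exp_rpow' (s a : ℝ) : Real.exp s ^ a = Real.exp (s * a) := by
  rw [Real.rpow_def_of_pos (Real.exp_pos _), Real.log_exp]

lemma bernoulli_aux {p y : ℝ} (hp : 1 ≤ p) (hy1 : y ≤ 1) :
    1 - p * y ≤ (1 - y) ^ p := by
  have h := one_add_mul_self_le_rpow_one_add (s := -y) (by linarith) hp
  simpa [sub_eq_add_neg] using h

lemma taylor2 {p x : ℝ} (hp : 2 ≤ p) (hx0 : 0 ≤ x) (hx1 : x ≤ 1) :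
    (1 - x) ^ p ≤ 1 - p * x + p * (p - 1) / 2 * x ^ 2 := by
  set g : ℝ → ℝ := fun y => 1 - p * y + p * (p - 1) / 2 * y ^ 2 - (1 - y) ^ p with hg
  have hderiv : ∀ y : ℝ, HasDerivAt g (-p + p * (p - 1) * y + p * (1 - y) ^ (p - 1)) y := by
    intro y
    have h1 : HasDerivAt (fun y : ℝ => (1 - y) ^ p) (p * (1 - y) ^ (p - 1) * (-1)) y := by
      have := (Real.hasDerivAt_rpow_const (x := 1 - y) (p := p)
        (Or.inr (by linarith))).comp y ((hasDerivAt_id y).const_sub 1)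
      exact this.congr_deriv (by ring)
    have h2 : HasDerivAt (fun y : ℝ => 1 - p * y + p * (p - 1) / 2 * y ^ 2)
        (-p + p * (p - 1) * y) y := by
      have := (((hasDerivAt_id y).const_mul p).const_sub 1).add
        ((hasDerivAt_pow 2 y).const_mul (p * (p - 1) / 2))
      refine this.congr_deriv ?_; push_cast; ring
    have := h2.sub h1
    refine this.congr_deriv ?_; ring
  have hmono : MonotoneOn g (Set.Icc 0 1) := by
    apply monotoneOn_of_deriv_nonneg (convex_Icc 0 1)
    · exact fun y _ => (hderiv y).differentiableAt.continuousAt.continuousWithinAt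
    · exact fun y _ => (hderiv y).differentiableAt.differentiableWithinAt
    · intro y hy
      rw [interior_Icc] at hy
      rw [(hderiv y).deriv]
      have hb : 1 - (p - 1) * y ≤ (1 - y) ^ (p - 1) :=
        bernoulli_aux (by linarith) hy.2.le
      nlinarith [hy.1.le, hy.2.le]
  have h0 : g 0 = 0 := by simp [hg]
  have hx : g 0 ≤ g x :=
    hmono (Set.left_mem_Icc.mpr zero_le_one) (Set.mem_Icc.mpr ⟨hx0, hx1⟩) hx0
  rw [h0] at hx
  simp only [hg] at hx
  linarith

lemma core {H x : ℝ} (hH0 : 0 < H) (hH1 : H < 1) (hx0 : 0 < x) (hx1 : x ≤ 1) :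
    (1 - x) ^ (2*H+2) - 1 - x ^ (2*H+2) + 2*(1+H)*(x + x ^ (1+2*H))
      ≤ (4+8*H) * x ^ min (1+2*H) 2 := by
  have hq2 : min (1+2*H) 2 ≤ 2 := min_le_right _ _
  have hq1 : min (1+2*H) 2 ≤ 1+2*H := min_le_left _ _
  have h1 : (1 - x) ^ (2*H+2) ≤ 1 - (2*H+2) * x + (2*H+2) * (2*H+2 - 1) / 2 * x ^ 2 :=
    taylor2 (by linarith) hx0.le hx1
  have h2 : (x : ℝ) ^ (2:ℝ) = x ^ 2 := by
    rw [show (2:ℝ) = ((2:ℕ):ℝ) by norm_num, Real.rpow_natCast]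
  have h3 : x ^ (2:ℝ) ≤ x ^ min (1+2*H) 2 :=
    Real.rpow_le_rpow_of_exponent_ge hx0 hx1 hq2
  have h4 : x ^ (1+2*H) ≤ x ^ min (1+2*H) 2 :=
    Real.rpow_le_rpow_of_exponent_ge hx0 hx1 hq1
  have h5 : (0:ℝ) ≤ x ^ (2*H+2) := Real.rpow_nonneg hx0.le _
  have h6 : (0:ℝ) ≤ x ^ min (1+2*H) 2 := Real.rpow_nonneg hx0.le _
  rw [h2] at h3
  have hA : (2*H+2) * (2*H+1) / 2 * (x ^ 2) ≤ (2*H+2) * (2*H+1) / 2 * x ^ min (1+2*H) 2 := by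
    apply mul_le_mul_of_nonneg_left h3; nlinarith
  have hB : (2+2*H) * x ^ (1+2*H) ≤ (2+2*H) * x ^ min (1+2*H) 2 := by
    apply mul_le_mul_of_nonneg_left h4; nlinarith
  have hC : (0:ℝ) ≤ (1 + 3*H - 2*H^2) * x ^ min (1+2*H) 2 := by
    apply mul_nonneg _ h6; nlinarith
  nlinarith [h1, h5, hA, hB, hC]

/-- large-`t` estimates (26)–(29), Admission 3 of Lemma 2, combined:
`B_H(t) ≤ 2 e^{−min(H, 1−H) t}` for every `H ∈ (0,1)` and every `t ≥ 0`. -/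
theorem statement12 (H t : ℝ) (hH : H ∈ Set.Ioo (0:ℝ) 1) (ht : 0 ≤ t) :
    BH H t ≤ 2 * Real.exp (-(min H (1 - H)) * t) := by
  obtain ⟨hH0, hH1⟩ := hH
  set x : ℝ := Real.exp (-t) with hxdef
  have hx0 : 0 < x := Real.exp_pos _
  have hx1 : x ≤ 1 := Real.exp_le_one_iff.mpr (by linarith)
  have hxr : ∀ a : ℝ, x ^ a = Real.exp (-(a * t)) := by
    intro a; rw [hxdef, exp_rpow']; congr 1; ring
  have hm : min H (1 - H) + (1 + H) = min (1+2*H) 2 := by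
    rcases le_total H (1 - H) with h | h
    · rw [min_eq_left h, min_eq_left (by linarith)]; ring
    · rw [min_eq_right h, min_eq_right (by linarith)]; ring
  have key : (Real.exp (t/2) - Real.exp (-t/2)) ^ (2*H+2)
      = Real.exp ((1+H)*t) * (1 - x) ^ (2*H+2) := by
    have h : Real.exp (t/2) - Real.exp (-t/2) = Real.exp (t/2) * (1 - x) := by
      rw [mul_sub, mul_one, hxdef, ← Real.exp_add]; congr 2; ring
    rw [h, Real.mul_rpow (Real.exp_pos _).le (by linarith), exp_rpow']
    congr 2; ring
  have e : Real.exp (-((1+H)*t)) > 0 := Real.exp_pos _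
  have e1 : Real.exp (H*t) * Real.exp (-((1+H)*t)) = x := by
    rw [← Real.exp_add, hxdef]; congr 1; ring
  have e2 : Real.exp (-(H*t)) * Real.exp (-((1+H)*t)) = x ^ (1+2*H) := by
    rw [← Real.exp_add, hxr]; congr 1; ring
  have e3 : Real.exp ((1+H)*t) * Real.exp (-((1+H)*t)) = 1 := by
    rw [← Real.exp_add]; simp
  have e4 : Real.exp (-((1+H)*t)) * Real.exp (-((1+H)*t)) = x ^ (2*H+2) := by
    rw [← Real.exp_add, hxr]; congr 1; ring
  have e5 : Real.exp (-(min H (1 - H)) * t) * Real.exp (-((1+H)*t))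
      = x ^ min (1+2*H) 2 := by
    rw [← Real.exp_add, hxr, ← hm]; congr 1; ring
  rw [BH, div_le_iff₀ (by linarith)]
  rw [← mul_le_mul_iff_of_pos_right e]
  calc (2*(1+H)*(Real.exp (H*t) + Real.exp (-H*t))
        - (Real.exp ((1+H)*t) + Real.exp (-(1+H)*t))
        + (Real.exp (t/2) - Real.exp (-t/2)) ^ (2*H+2)) * Real.exp (-((1+H)*t))
      = 2*(1+H)*(Real.exp (H*t) * Real.exp (-((1+H)*t))
          + Real.exp (-(H*t)) * Real.exp (-((1+H)*t)))
        - (Real.exp ((1+H)*t) * Real.exp (-((1+H)*t))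
          + Real.exp (-((1+H)*t)) * Real.exp (-((1+H)*t)))
        + (Real.exp ((1+H)*t) * Real.exp (-((1+H)*t))) * (1 - x) ^ (2*H+2) := by
        rw [key]; ring_nf
    _ = (1 - x) ^ (2*H+2) - 1 - x ^ (2*H+2) + 2*(1+H)*(x + x ^ (1+2*H)) := by
        rw [e1, e2, e3, e4]; ring
    _ ≤ (4+8*H) * x ^ min (1+2*H) 2 := core hH0 hH1 hx0 hx1
    _ = 2 * Real.exp (-(min H (1 - H)) * t) * (2+4*H) * Real.exp (-((1+H)*t)) := by
        rw [← e5]; ring
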